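/- Let X be a finite set of alternatives and (𝓑, c) a data set rationalized by a strict preference relation ≻ and an attention filter Γ, i.e., for every B ∈ 𝓑, c(B) ∈ Γ(B) and c(B) ≻ y for every y ∈ Γ(B) ∖ {c(B)}. If B, B′ ∈ 𝓑 satisfy c(B) ≠ c(B′) and c(B), c(B′) ∈ B ∩ B′, then Γ(B) ∩ (B ∖ B′) ≠ ∅ or Γ(B′) ∩ (B′ ∖ B) ≠ ∅. -/

import Mathlib

/-- A strict preference relation: complete on distinct elements, transitive, asymmetric. -/
def StrictPref {X : Type*} (r : X → X → Prop) : Prop :=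
  (∀ x y : X, x ≠ y → r x y ∨ r y x) ∧
  (∀ x y z : X, r x y → r y z → r x z) ∧
  (∀ x y : X, r x y → ¬ r y x)

/-- An attention filter: for every nonempty budget `B`, `Γ B` is a nonempty subset of `B`,
and removing an unconsidered alternative does not change the consideration set. -/
def AttentionFilter {X : Type*} [DecidableEq X] (Γ : Finset X → Finset X) : Prop :=
  ∀ B : Finset X, B.Nonempty →
    (Γ B).Nonempty ∧ Γ B ⊆ B ∧ ∀ x ∈ B, x ∉ Γ B → Γ (B.erase x) = Γ B

/-- `(r, Γ)` is a rationalizing pair for the data set `(𝓑, c)` with `k`-th order CLA. -/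
def Rationalizes {X : Type*} [DecidableEq X] (𝓑 : Set (Finset X)) (c : Finset X → X)
    (k : ℕ) (r : X → X → Prop) (Γ : Finset X → Finset X) : Prop :=
  StrictPref r ∧ AttentionFilter Γ ∧
  (∀ B : Finset X, B.Nonempty → min B.card k ≤ (Γ B).card) ∧
  ∀ B ∈ 𝓑, c B ∈ Γ B ∧ ∀ y ∈ Γ B, y ≠ c B → r (c B) y

/-- The data set `(𝓑, c)` is rationalizable with `k`-th order CLA. -/
def RationalizableCLA {X : Type*} [DecidableEq X] (𝓑 : Set (Finset X))
    (c : Finset X → X) (k : ℕ) : Prop :=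
  ∃ (r : X → X → Prop) (Γ : Finset X → Finset X), Rationalizes 𝓑 c k r Γ

lemma af_sdiff {X : Type*} [DecidableEq X] {Γ : Finset X → Finset X}
    (hΓ : AttentionFilter Γ) :
    ∀ (D B : Finset X), B.Nonempty → D ⊆ B → (∀ x ∈ D, x ∉ Γ B) →
      Γ (B \ D) = Γ B := by
  intro D
  induction D using Finset.induction_on with
  | empty => intro B hBne _ _; simp
  | @insert a D ha ih =>
    intro B hBne hsub hdisj
    have haB : a ∈ B := hsub (Finset.mem_insert_self a D)
    have haΓ : a ∉ Γ B := hdisj a (Finset.mem_insert_self a D)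
    have herase : Γ (B.erase a) = Γ B := (hΓ B hBne).2.2 a haB haΓ
    obtain ⟨y, hy⟩ := (hΓ B hBne).1
    have hyB : y ∈ B := (hΓ B hBne).2.1 hy
    have hne : (B.erase a).Nonempty :=
      ⟨y, Finset.mem_erase.2 ⟨fun h => haΓ (h ▸ hy), hyB⟩⟩
    have hsub' : D ⊆ B.erase a := by
      intro x hx
      exact Finset.mem_erase.2 ⟨fun h => ha (h ▸ hx), hsub (Finset.mem_insert_of_mem hx)⟩
    have hstep : Γ (B.erase a \ D) = Γ (B.erase a) := by
      apply ih (B.erase a) hne hsub'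
      intro x hx
      rw [herase]
      exact hdisj x (Finset.mem_insert_of_mem hx)
    have hset : B \ insert a D = B.erase a \ D := by
      ext x
      simp only [Finset.mem_sdiff, Finset.mem_erase, Finset.mem_insert]
      tauto
    rw [hset, hstep, herase]

theorem attention_overlap_of_choice_reversal {X : Type*} [Fintype X] [DecidableEq X]
    (𝓑 : Set (Finset X)) (c : Finset X → X)
    (hchoice : ∀ B ∈ 𝓑, c B ∈ B)
    (r : X → X → Prop) (Γ : Finset X → Finset X)
    (hr : StrictPref r) (hΓ : AttentionFilter Γ)
    (hrat : ∀ B ∈ 𝓑, c B ∈ Γ B ∧ ∀ y ∈ Γ B, y ≠ c B → r (c B) y)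
    (B B' : Finset X) (hB : B ∈ 𝓑) (hB' : B' ∈ 𝓑)
    (hne : c B ≠ c B') (h1 : c B ∈ B ∩ B') (h2 : c B' ∈ B ∩ B') :
    (Γ B ∩ (B \ B')).Nonempty ∨ (Γ B' ∩ (B' \ B)).Nonempty := by
  by_contra h
  push_neg at h
  obtain ⟨hA, hA'⟩ := h
  have hBne : B.Nonempty := ⟨c B, (Finset.mem_inter.1 h1).1⟩
  have hB'ne : B'.Nonempty := ⟨c B', (Finset.mem_inter.1 h2).2⟩
  have key1 : Γ (B \ (B \ B')) = Γ B := by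
    apply af_sdiff hΓ _ _ hBne Finset.sdiff_subset
    intro x hx hxΓ
    exact Finset.notMem_empty x (hA ▸ Finset.mem_inter.2 ⟨hxΓ, hx⟩)
  have key2 : Γ (B' \ (B' \ B)) = Γ B' := by
    apply af_sdiff hΓ _ _ hB'ne Finset.sdiff_subset
    intro x hx hxΓ
    exact Finset.notMem_empty x (hA' ▸ Finset.mem_inter.2 ⟨hxΓ, hx⟩)
  rw [Finset.sdiff_sdiff_self_left] at key1 key2
  rw [Finset.inter_comm B' B] at key2
  have hΓeq : Γ B = Γ B' := by rw [← key1, ← key2]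
  obtain ⟨hcB, hrB⟩ := hrat B hB
  obtain ⟨hcB', hrB'⟩ := hrat B' hB'
  have ha1 : r (c B) (c B') := hrB (c B') (hΓeq ▸ hcB') (Ne.symm hne)
  have ha2 : r (c B') (c B) := hrB' (c B) (hΓeq ▸ hcB) hne
  exact hr.2.2 _ _ ha1 ha2
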